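/- Let R be a topological ring with identity and let 𝓘 be a family of closed two-sided ideals of R that are pairwise topologically co-maximal and satisfy: for every neighborhood ε of 0, the set of I ∈ 𝓘 with I + ε ≠ R is finite. Equip Π = ∏_{I ∈ 𝓘} R/I with the ring topology whose fundamental system of neighborhoods of 0 is the family of sets U(ε) = {(a_I + I)_{I ∈ 𝓘} : a_I ∈ I + ε for all I ∈ 𝓘}, for ε a neighborhood of 0 in R. Then the canonical homomorphism φ : R → Π, φ(r) = (r + I)_{I ∈ 𝓘}, is continuous and its image is dense in Π. -/

import Mathlib

open Pointwise

section CRAHelpers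

variable {R : Type*} [Ring R] [TopologicalSpace R] [IsTopologicalRing R]

/-- A set with dense closure plus any neighborhood of zero is everything. -/
lemma craux_dense_add {S : Set R} (hS : closure S = Set.univ) {δ : Set R}
    (hδ : δ ∈ nhds (0 : R)) : S + δ = Set.univ := by
  ext x
  simp only [Set.mem_univ, iff_true]
  have hx : x ∈ closure S := hS ▸ Set.mem_univ x
  have hN : {y : R | x - y ∈ δ} ∈ nhds x := by
    have hc : ContinuousAt (fun y : R => x - y) x :=
      (continuous_const.sub continuous_id).continuousAt
    exact hc.preimage_mem_nhds (by simpa using hδ)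
  obtain ⟨s, hs1, hs2⟩ := mem_closure_iff_nhds.mp hx _ hN
  exact Set.mem_add.mpr ⟨s, hs2, x - s, hs1, by abel⟩

/-- Finite CRT approximation, with one exact congruence. -/
lemma craux_main (F : Finset (TwoSidedIdeal R)) :
    ∀ J : TwoSidedIdeal R,
    (∀ I ∈ F, closure ((J : Set R) + (I : Set R)) = Set.univ) →
    (∀ I ∈ F, ∀ K ∈ F, I ≠ K → closure ((I : Set R) + (K : Set R)) = Set.univ) →
    ∀ (bJ : R) (b : TwoSidedIdeal R → R) (ε : Set R), ε ∈ nhds (0 : R) →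
    ∃ r : R, r - bJ ∈ J ∧ ∀ I ∈ F, r - b I ∈ (I : Set R) + ε := by
  classical
  induction F using Finset.induction_on with
  | empty =>
      intro J _ _ bJ b ε hε
      exact ⟨bJ, by simpa using J.zero_mem, fun I hI => absurd hI (by simp)⟩
  | @insert I₀ F' hI₀ IH =>
      intro J hJ hp bJ b ε hε
      have h0ε : (0 : R) ∈ ε := mem_of_mem_nhds hε
      -- half neighborhood
      obtain ⟨δ₁, hδ₁, hδ₁half⟩ := exists_nhds_zero_half hε
      -- step 1 : solve on F' with exact ideal J
      obtain ⟨r', hr'J, hr'⟩ := IH J (fun I hI => hJ I (Finset.mem_insert_of_mem hI))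
        (fun I hI K hK h => hp I (Finset.mem_insert_of_mem hI) K (Finset.mem_insert_of_mem hK) h)
        bJ b δ₁ hδ₁
      set c : R := b I₀ - r' with hc
      -- step 2 : a neighborhood δ₂ with c * (-δ₂) ⊆ ε
      have hδ₂ : (fun x : R => c * (-x)) ⁻¹' ε ∈ nhds (0 : R) := by
        have hc2 : ContinuousAt (fun x : R => c * (-x)) 0 :=
          (continuous_const.mul continuous_neg).continuousAt
        exact hc2.preimage_mem_nhds (by simpa using hε)
      -- step 3 : approximate comaximality of J and I₀
      have hA : ((J : Set R) + (I₀ : Set R)) + ((fun x : R => c * (-x)) ⁻¹' ε) = Set.univ :=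
        craux_dense_add (hJ I₀ (Finset.mem_insert_self _ _)) hδ₂
      have h1 : (1 : R) ∈ ((J : Set R) + (I₀ : Set R)) + ((fun x : R => c * (-x)) ⁻¹' ε) := by
        rw [hA]; trivial
      obtain ⟨s, hs, d, hd, hsd⟩ := Set.mem_add.mp h1
      obtain ⟨j, hj, i, hi, hji⟩ := Set.mem_add.mp hs
      simp only [SetLike.mem_coe] at hj hi
      -- e₀ := 1 - i - d = j ∈ J
      have he₀J : (1 : R) - i - d ∈ J := by
        have : (1 : R) - i - d = j := by rw [← hsd, ← hji]; abel
        rw [this]; exact hj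
      set e₀ : R := 1 - i - d with he₀
      -- step 4 : a neighborhood δ₃ with (c * e₀) * δ₃ ⊆ δ₁
      have hδ₃ : (fun x : R => (c * e₀) * x) ⁻¹' δ₁ ∈ nhds (0 : R) := by
        have hc3 : ContinuousAt (fun x : R => (c * e₀) * x) 0 :=
          (continuous_const.mul continuous_id).continuousAt
        exact hc3.preimage_mem_nhds (by simpa using hδ₁)
      -- step 5 : approximate idempotent for I₀ against F'
      obtain ⟨e₁, he₁I₀, he₁⟩ := IH I₀
        (fun I hI => hp I₀ (Finset.mem_insert_self _ _) I (Finset.mem_insert_of_mem hI)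
          (fun h => hI₀ (h ▸ hI)))
        (fun I hI K hK h => hp I (Finset.mem_insert_of_mem hI) K (Finset.mem_insert_of_mem hK) h)
        1 (fun _ => 0) _ hδ₃
      refine ⟨r' + c * (e₀ * e₁), ?_, ?_⟩
      · -- exact congruence mod J
        have heq : r' + c * (e₀ * e₁) - bJ = (r' - bJ) + c * (e₀ * e₁) := by abel
        rw [heq]
        exact J.add_mem hr'J (J.mul_mem_left _ _ (J.mul_mem_right _ _ he₀J))
      · intro I hI
        rcases Finset.mem_insert.mp hI with hII₀ | hIF'
        · -- the ideal I₀
          subst hII₀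
          have hmem : c * (e₀ * (e₁ - 1)) - c * i ∈ I := by
            refine I.sub_mem (I.mul_mem_left _ _ (I.mul_mem_left _ _ he₁I₀)) ?_
            exact I.mul_mem_left _ _ hi
          have heq : r' + c * (e₀ * e₁) - b I
              = (c * (e₀ * (e₁ - 1)) - c * i) + (c * (-d)) := by
            rw [hc, he₀]; noncomm_ring
          rw [heq]
          exact Set.add_mem_add hmem hd
        · -- ideals of F'
          obtain ⟨xI, hxI, u, hu, hxu⟩ := Set.mem_add.mp (hr' I hIF')
          obtain ⟨yI, hyI, v, hv, hyv⟩ := Set.mem_add.mp (he₁ I hIF')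
          simp only [SetLike.mem_coe] at hxI hyI
          have hr'eq : r' = xI + u + b I := by rw [hxu]; abel
          have he₁eq : e₁ = yI + v := by rw [hyv]; abel
          have heq : r' + c * (e₀ * e₁) - b I
              = (xI + c * (e₀ * yI)) + (u + (c * e₀) * v) := by
            rw [hr'eq, he₁eq]; noncomm_ring
          rw [heq]
          refine Set.add_mem_add ?_ (hδ₁half _ hu _ hv)
          exact I.add_mem hxI (I.mul_mem_left _ _ (I.mul_mem_left _ _ hyI))

/-- Finite CRT approximation, all congruences approximate. -/
lemma craux_main' (F : Finset (TwoSidedIdeal R))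
    (hp : ∀ I ∈ F, ∀ K ∈ F, I ≠ K → closure ((I : Set R) + (K : Set R)) = Set.univ)
    (b : TwoSidedIdeal R → R) (ε : Set R) (hε : ε ∈ nhds (0 : R)) :
    ∃ r : R, ∀ I ∈ F, r - b I ∈ (I : Set R) + ε := by
  classical
  rcases F.eq_empty_or_nonempty with rfl | ⟨J, hJ⟩
  · exact ⟨0, fun I hI => absurd hI (by simp)⟩
  · obtain ⟨r, hrJ, hr⟩ := craux_main (F.erase J) J
      (fun I hI => hp J hJ I (Finset.mem_of_mem_erase hI) (Finset.ne_of_mem_erase hI).symm)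
      (fun I hI K hK h => hp I (Finset.mem_of_mem_erase hI) K (Finset.mem_of_mem_erase hK) h)
      (b J) b ε hε
    refine ⟨r, fun I hI => ?_⟩
    rcases eq_or_ne I J with rfl | hne
    · exact Set.mem_add.mpr ⟨r - b I, hrJ, 0, mem_of_mem_nhds hε, by rw [add_zero]⟩
    · exact hr I (Finset.mem_erase.mpr ⟨hne, hI⟩)

end CRAHelpers

/-- The Chinese Remainder Approximation Theorem. Let `𝓘` be a family of closed two-sided
ideals of a topological ring `R`, pairwise topologically co-maximal, such that for every
neighborhood `ε` of `0` only finitely many `I ∈ 𝓘` fail to satisfy `I + ε = R`. Equip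
`Π = ∏_{I ∈ 𝓘} R/I` with the ring topology whose fundamental system of neighborhoods of `0`
is given by the sets `U(ε) = {(a_I + I)_I : a_I ∈ I + ε for all I}`. Then the canonical
homomorphism `φ : R → Π`, `φ(r) = (r + I)_I`, is continuous and has dense image. -/
theorem chinese_remainder_approximation {R : Type*} [Ring R] [TopologicalSpace R]
    [IsTopologicalRing R] [T2Space R] (𝓘 : Set (TwoSidedIdeal R))
    (hclosed : ∀ I ∈ 𝓘, IsClosed (I : Set R))
    (hTCM : 𝓘.Pairwise fun I J => closure ((I : Set R) + (J : Set R)) = Set.univ)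
    (hfin : ∀ ε ∈ nhds (0 : R), {I ∈ 𝓘 | (I : Set R) + ε ≠ Set.univ}.Finite)
    (t : TopologicalSpace (∀ I : 𝓘, (I : TwoSidedIdeal R).ringCon.Quotient))
    (htr : @IsTopologicalRing _ t _)
    (hbasis : (@nhds _ t 0).HasBasis (fun ε : Set R => ε ∈ nhds (0 : R))
      (fun ε => {x : ∀ I : 𝓘, (I : TwoSidedIdeal R).ringCon.Quotient |
        ∀ I : 𝓘, ∃ a ∈ ((I : TwoSidedIdeal R) : Set R) + ε,
          (I : TwoSidedIdeal R).ringCon.mk' a = x I})) :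
    @Continuous R _ _ t (fun r (I : 𝓘) => (I : TwoSidedIdeal R).ringCon.mk' r) ∧
    @Dense _ t (Set.range (fun r (I : 𝓘) => (I : TwoSidedIdeal R).ringCon.mk' r)) := by
  classical
  letI := t
  haveI := htr
  set φ : R →+* (∀ I : 𝓘, (I : TwoSidedIdeal R).ringCon.Quotient) :=
    Pi.ringHom (fun I : 𝓘 => (I : TwoSidedIdeal R).ringCon.mk') with hφ
  have hcont : Continuous φ := by
    apply continuous_of_continuousAt_zero φ
    rw [ContinuousAt, map_zero, hbasis.tendsto_right_iff]
    intro ε hε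
    filter_upwards [hε] with r hr
    intro I
    exact ⟨0 + r, Set.add_mem_add (I : TwoSidedIdeal R).zero_mem hr, by rw [zero_add]; rfl⟩
  constructor
  · exact hcont
  · -- density
    intro x
    -- neighborhoods of x
    have hbx : (@nhds _ t x).HasBasis (fun ε : Set R => ε ∈ nhds (0 : R))
        (fun ε => (fun y => x + y) '' {z : ∀ I : 𝓘, (I : TwoSidedIdeal R).ringCon.Quotient |
          ∀ I : 𝓘, ∃ a ∈ ((I : TwoSidedIdeal R) : Set R) + ε,
            (I : TwoSidedIdeal R).ringCon.mk' a = z I}) := by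
      have := hbasis.map (fun y => x + y)
      rwa [map_add_left_nhds_zero] at this
    rw [mem_closure_iff_nhds_basis hbx]
    intro ε hε
    -- choose representatives
    have hrep : ∀ I : 𝓘, ∃ a : R, (I : TwoSidedIdeal R).ringCon.mk' a = x I :=
      fun I => Quotient.mk''_surjective (x I)
    choose bfun hbfun using hrep
    obtain ⟨Ffin⟩ : Nonempty ({I ∈ 𝓘 | (I : Set R) + ε ≠ Set.univ}.Finite) := ⟨hfin ε hε⟩
    obtain ⟨r, hr⟩ := craux_main' Ffin.toFinset
      (fun I hI K hK h => by
        rw [Set.Finite.mem_toFinset] at hI hK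
        exact hTCM hI.1 hK.1 h)
      (fun K => if h : K ∈ 𝓘 then bfun ⟨K, h⟩ else 0) ε hε
    refine ⟨(fun I : 𝓘 => (I : TwoSidedIdeal R).ringCon.mk' r), ⟨r, rfl⟩, ?_⟩
    refine ⟨fun I : 𝓘 => (I : TwoSidedIdeal R).ringCon.mk' (r - bfun I), fun I => ?_, ?_⟩
    · refine ⟨r - bfun I, ?_, rfl⟩
      by_cases hmem : (I : TwoSidedIdeal R) ∈ Ffin.toFinset
      · have h2 := hr _ hmem
        rwa [dif_pos I.2] at h2
      · rw [Set.Finite.mem_toFinset] at hmem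
        have : ((I : TwoSidedIdeal R) : Set R) + ε = Set.univ := by
          by_contra h
          exact hmem ⟨I.2, h⟩
        rw [this]; trivial
    · funext I
      simp only [Pi.add_apply]
      rw [map_sub, hbfun I]
      abel
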